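/- arXiv:2306.10871 — 4 statements merged into one kernel-verified Lean document; each statement's English description precedes it below -/
import Mathlib

section
/- Let P be a finite index set partitioned into nonempty sets 𝔰 and 𝔲 (the indices of the stable and unstable subsystems), let (A_p)_{p∈P} be n×n real matrices and 𝓘 a compact set of n×n real matrices. Suppose there exist symmetric positive definite matrices (Q_p)_{p∈P} and constants λ_p > 0 (p ∈ 𝔰), μ_p > 0 (p ∈ 𝔲), and γ_{(p,q)} ≥ 1 (p,q ∈ P) such that Q_p·A_p + A_pᵀ·Q_p ⪯ −λ_p·Q_p for all p ∈ 𝔰, Q_p·A_p + A_pᵀ·Q_p ⪯ μ_p·Q_p for all p ∈ 𝔲, and Mᵀ·Q_p·M ⪯ γ_{(q,p)}·Q_q for all p, q ∈ P and all M ∈ 𝓘. Set λ = min_{p∈𝔰} λ_p, μ = max_{p∈𝔲} μ_p and γ = max_{p,q∈P} γ_{(p,q)}. Let τ, η > 0, let p : ℕ → P be an infinite switching sequence and d_1, d_2, … positive durations with d_k ≥ τ whenever p_{k−1} ∈ 𝔰 and d_k ≤ η whenever p_{k−1} ∈ 𝔲, and set N_s(j) = #{0 ≤ i < j : p_i ∈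 𝔰} and N_u(j) = #{0 ≤ i < j : p_i ∈ 𝔲}. If limsup_{j→∞} ( −λ·N_s(j)·τ + μ·N_u(j)·η + j·ln γ ) < 0, then there exists C > 0 such that for every choice of impulses M_1, M_2, … ∈ 𝓘, every j ≥ 0 and every s with 0 ≤ s ≤ d_{j+1}, one has ‖exp(s·A_{p_j})·Ψ_j‖ ≤ C; that is, the impulsive switched system is stable under arbitrary impulses along this switching signal. -/
open Matrix NormedSpace
open scoped Matrix.Norms.L2Operator

noncomputable section

/-- A real square matrix is Hurwitz stable if every eigenvalue of it, regarded as a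
complex matrix, has negative real part. -/
def HurwitzStable {n : ℕ} (A : Matrix (Fin n) (Fin n) ℝ) : Prop :=
  ∀ μ ∈ spectrum ℂ (A.map (Complex.ofReal ·)), μ.re < 0

/-- A real square matrix is unstable if some eigenvalue of it, regarded as a
complex matrix, has positive real part. -/
def HasUnstableEigenvalue {n : ℕ} (A : Matrix (Fin n) (Fin n) ℝ) : Prop :=
  ∃ μ ∈ spectrum ℂ (A.map (Complex.ofReal ·)), 0 < μ.re

/-- The transition matrix `Φ_j` of the reset switched system: for the switching sequence
`p 0, p 1, …`, durations `d 1, d 2, …` and reset matrices `R`, it is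
`Φ_j = R_{(p_{j−1},p_j)} exp(d_j A_{p_{j−1}}) ⋯ R_{(p_0,p_1)} exp(d_1 A_{p_0})`, `Φ_0 = 1`. -/
def resetTransition {n : ℕ} {P : Type*} (A : P → Matrix (Fin n) (Fin n) ℝ)
    (R : P → P → Matrix (Fin n) (Fin n) ℝ) (p : ℕ → P) (d : ℕ → ℝ) :
    ℕ → Matrix (Fin n) (Fin n) ℝ
  | 0 => 1
  | j + 1 => R (p j) (p (j + 1)) * exp (d (j + 1) • A (p j)) * resetTransition A R p d j

/-- The transition matrix `Ψ_j` of the impulsive switched system: for the switching sequence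
`p 0, p 1, …`, durations `d 1, d 2, …` and impulse matrices `M 1, M 2, …`, it is
`Ψ_j = M_j exp(d_j A_{p_{j−1}}) ⋯ M_1 exp(d_1 A_{p_0})`, `Ψ_0 = 1`. -/
def impulsiveTransition {n : ℕ} {P : Type*} (A : P → Matrix (Fin n) (Fin n) ℝ)
    (M : ℕ → Matrix (Fin n) (Fin n) ℝ) (p : ℕ → P) (d : ℕ → ℝ) :
    ℕ → Matrix (Fin n) (Fin n) ℝ
  | 0 => 1
  | j + 1 => M (j + 1) * exp (d (j + 1) • A (p j)) * impulsiveTransition A M p d j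

section MLFAux

variable {n : ℕ}

/-- auxiliary: right multiplication-by-vector as a continuous linear map in the matrix. -/
def mulVecCLM (x : Fin n → ℝ) : Matrix (Fin n) (Fin n) ℝ →L[ℝ] (Fin n → ℝ) :=
  LinearMap.toContinuousLinearMap
    { toFun := fun M => M *ᵥ x
      map_add' := fun M N => Matrix.add_mulVec M N x
      map_smul' := fun c M => Matrix.smul_mulVec c M x }

@[simp] lemma mulVecCLM_apply (x : Fin n → ℝ) (M : Matrix (Fin n) (Fin n) ℝ) :
    mulVecCLM x M = M *ᵥ x := rfl

/-- the quadratic/bilinear form of `Q` as a continuous bilinear map. -/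
def qfCLM (Q : Matrix (Fin n) (Fin n) ℝ) : (Fin n → ℝ) →L[ℝ] (Fin n → ℝ) →L[ℝ] ℝ :=
  LinearMap.toContinuousLinearMap
    ((LinearMap.toContinuousLinearMap :
        ((Fin n → ℝ) →ₗ[ℝ] ℝ) ≃ₗ[ℝ] ((Fin n → ℝ) →L[ℝ] ℝ)).toLinearMap.comp
      (Matrix.toBilin' Q))

@[simp] lemma qfCLM_apply (Q : Matrix (Fin n) (Fin n) ℝ) (v w : Fin n → ℝ) :
    qfCLM Q v w = v ⬝ᵥ Q *ᵥ w := by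
  simp [qfCLM, Matrix.toBilin'_apply']

lemma flow_hasDerivAt (Q A : Matrix (Fin n) (Fin n) ℝ) (x : Fin n → ℝ) (t : ℝ) :
    HasDerivAt (fun t : ℝ => (exp (t • A) *ᵥ x) ⬝ᵥ Q *ᵥ (exp (t • A) *ᵥ x))
      ((A *ᵥ (exp (t • A) *ᵥ x)) ⬝ᵥ Q *ᵥ (exp (t • A) *ᵥ x)
        + (exp (t • A) *ᵥ x) ⬝ᵥ Q *ᵥ (A *ᵥ (exp (t • A) *ᵥ x))) t := by
  have hu : ∀ s : ℝ, HasDerivAt (fun s : ℝ => exp (s • A) *ᵥ x)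
      (A *ᵥ (exp (s • A) *ᵥ x)) s := by
    intro s
    have h := ((mulVecCLM x).hasFDerivAt.comp_hasDerivAt s
      (hasDerivAt_exp_smul_const' (𝕂 := ℝ) A s))
    simpa [Function.comp_def, Matrix.mulVec_mulVec] using h
  have hc : HasDerivAt (fun s : ℝ => qfCLM Q (exp (s • A) *ᵥ x))
      (qfCLM Q (A *ᵥ (exp (t • A) *ᵥ x))) t :=
    (qfCLM Q).hasFDerivAt.comp_hasDerivAt t (hu t)
  have := hc.clm_apply (hu t)
  simpa using this

lemma psd_quad {X : Matrix (Fin n) (Fin n) ℝ} (hX : X.PosSemidef) (x : Fin n → ℝ) :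
    0 ≤ x ⬝ᵥ X *ᵥ x := by simpa using hX.dotProduct_mulVec_nonneg x

lemma flow_bound (Q A : Matrix (Fin n) (Fin n) ℝ) (c : ℝ)
    (h : (c • Q - (Q * A + Aᵀ * Q)).PosSemidef) (x : Fin n → ℝ) {t : ℝ} (ht : 0 ≤ t) :
    (exp (t • A) *ᵥ x) ⬝ᵥ Q *ᵥ (exp (t • A) *ᵥ x)
      ≤ Real.exp (c * t) * (x ⬝ᵥ Q *ᵥ x) := by
  set u : ℝ → (Fin n → ℝ) := fun s => exp (s • A) *ᵥ x with hu_def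
  have hg : ∀ s, HasDerivAt (fun s => u s ⬝ᵥ Q *ᵥ u s)
      ((A *ᵥ u s) ⬝ᵥ Q *ᵥ u s + u s ⬝ᵥ Q *ᵥ (A *ᵥ u s)) s :=
    fun s => flow_hasDerivAt Q A x s
  have key : ∀ s, (A *ᵥ u s) ⬝ᵥ Q *ᵥ u s + u s ⬝ᵥ Q *ᵥ (A *ᵥ u s)
      ≤ c * (u s ⬝ᵥ Q *ᵥ u s) := by
    intro s
    have h0 := psd_quad h (u s)
    have e1 : (A *ᵥ u s) ⬝ᵥ Q *ᵥ u s = u s ⬝ᵥ ((Aᵀ * Q) *ᵥ u s) := by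
      rw [← Matrix.mulVec_mulVec, Matrix.dotProduct_mulVec (u s) Aᵀ,
        Matrix.vecMul_transpose]
    have e2 : u s ⬝ᵥ Q *ᵥ (A *ᵥ u s) = u s ⬝ᵥ ((Q * A) *ᵥ u s) := by
      rw [Matrix.mulVec_mulVec]
    have e3 : u s ⬝ᵥ ((Aᵀ * Q) *ᵥ u s) + u s ⬝ᵥ ((Q * A) *ᵥ u s)
        = u s ⬝ᵥ ((Q * A + Aᵀ * Q) *ᵥ u s) := by
      rw [Matrix.add_mulVec, dotProduct_add]; ring
    have h0' : u s ⬝ᵥ ((Q * A + Aᵀ * Q) *ᵥ u s) ≤ c * (u s ⬝ᵥ Q *ᵥ u s) := by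
      rw [Matrix.sub_mulVec, dotProduct_sub, sub_nonneg, Matrix.smul_mulVec,
        dotProduct_smul] at h0
      simpa [smul_eq_mul] using h0
    rw [e1, e2]
    linarith
  have hderiv : ∀ s, HasDerivAt (fun s => Real.exp (-c * s) * (u s ⬝ᵥ Q *ᵥ u s))
      (Real.exp (-c * s) * (((A *ᵥ u s) ⬝ᵥ Q *ᵥ u s + u s ⬝ᵥ Q *ᵥ (A *ᵥ u s))
        - c * (u s ⬝ᵥ Q *ᵥ u s))) s := by
    intro s
    have he : HasDerivAt (fun s : ℝ => Real.exp (-c * s)) (-c * Real.exp (-c * s)) s := by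
      simpa [Function.comp_def, mul_comm] using (Real.hasDerivAt_exp (-c * s)).comp s
        ((hasDerivAt_id s).const_mul (-c))
    have := he.mul (hg s)
    refine this.congr_deriv ?_
    ring
  have hanti : Antitone (fun s => Real.exp (-c * s) * (u s ⬝ᵥ Q *ᵥ u s)) := by
    apply antitone_of_deriv_nonpos
    · intro s; exact (hderiv s).differentiableAt
    · intro s
      rw [(hderiv s).deriv]
      have := key s
      nlinarith [Real.exp_pos (-c * s)]
  have h0 : Real.exp (-c * t) * (u t ⬝ᵥ Q *ᵥ u t)
      ≤ Real.exp (-c * 0) * (u 0 ⬝ᵥ Q *ᵥ u 0) := hanti ht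
  have hg0 : u 0 ⬝ᵥ Q *ᵥ u 0 = x ⬝ᵥ Q *ᵥ x := by
    simp [hu_def, Matrix.one_mulVec, exp_zero]
  rw [hg0] at h0
  simp only [mul_zero, Real.exp_zero, one_mul] at h0
  calc u t ⬝ᵥ Q *ᵥ u t
      = Real.exp (c * t) * (Real.exp (-c * t) * (u t ⬝ᵥ Q *ᵥ u t)) := by
        rw [← mul_assoc, ← Real.exp_add]; simp
    _ ≤ Real.exp (c * t) * (x ⬝ᵥ Q *ᵥ x) :=
        mul_le_mul_of_nonneg_left h0 (Real.exp_pos _).le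

lemma impulse_bound {Qp Qq M : Matrix (Fin n) (Fin n) ℝ} {γ' : ℝ}
    (h : (γ' • Qq - Mᵀ * Qp * M).PosSemidef) (x : Fin n → ℝ) :
    (M *ᵥ x) ⬝ᵥ Qp *ᵥ (M *ᵥ x) ≤ γ' * (x ⬝ᵥ Qq *ᵥ x) := by
  have h0 := psd_quad h x
  rw [Matrix.sub_mulVec, dotProduct_sub, sub_nonneg, Matrix.smul_mulVec,
    dotProduct_smul] at h0
  have e : x ⬝ᵥ ((Mᵀ * Qp * M) *ᵥ x) = (M *ᵥ x) ⬝ᵥ Qp *ᵥ (M *ᵥ x) := by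
    rw [← Matrix.mulVec_mulVec, ← Matrix.mulVec_mulVec, Matrix.dotProduct_mulVec x Mᵀ,
      Matrix.vecMul_transpose]
  rw [e] at h0
  simpa [smul_eq_mul] using h0

lemma quad_bounds (Q : Matrix (Fin n) (Fin n) ℝ) (hQ : Q.PosDef) :
    ∃ a > (0:ℝ), ∃ b > (0:ℝ), ∀ x : Fin n → ℝ,
      a * (x ⬝ᵥ x) ≤ x ⬝ᵥ Q *ᵥ x ∧ x ⬝ᵥ Q *ᵥ x ≤ b * (x ⬝ᵥ x) := by
  rcases Nat.eq_zero_or_pos n with hn | hn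
  · subst hn
    exact ⟨1, one_pos, 1, one_pos, fun x => by
      simp [dotProduct, mulVec]⟩
  haveI : Nonempty (Fin n) := ⟨⟨0, hn⟩⟩
  -- continuity of the quadratic form on Euclidean space
  have hcont : Continuous fun x : EuclideanSpace ℝ (Fin n) =>
      (WithLp.equiv 2 (Fin n → ℝ) x) ⬝ᵥ Q *ᵥ (WithLp.equiv 2 (Fin n → ℝ) x) := by
    have hc : Continuous fun y : Fin n → ℝ => y ⬝ᵥ Q *ᵥ y := by
      unfold dotProduct mulVec
      exact continuous_finset_sum _ fun i _ =>
        (continuous_apply i).mul (continuous_finset_sum _ fun j _ =>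
          continuous_const.mul (continuous_apply j))
    exact hc.comp (PiLp.continuous_ofLp 2 fun _ : Fin n => ℝ)
  have hsph : IsCompact (Metric.sphere (0 : EuclideanSpace ℝ (Fin n)) 1) :=
    isCompact_sphere 0 1
  have hsne : (Metric.sphere (0 : EuclideanSpace ℝ (Fin n)) 1).Nonempty :=
    NormedSpace.sphere_nonempty.mpr zero_le_one
  obtain ⟨xm, hxm, hxmin⟩ := hsph.exists_isMinOn hsne hcont.continuousOn
  obtain ⟨xM, hxM, hxmax⟩ := hsph.exists_isMaxOn hsne hcont.continuousOn
  set f : (Fin n → ℝ) → ℝ := fun y => y ⬝ᵥ Q *ᵥ y with hf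
  set a := f (WithLp.equiv 2 (Fin n → ℝ) xm) with ha
  set b := f (WithLp.equiv 2 (Fin n → ℝ) xM) with hb
  have hnorm_sq : ∀ x : EuclideanSpace ℝ (Fin n),
      (WithLp.equiv 2 (Fin n → ℝ) x) ⬝ᵥ (WithLp.equiv 2 (Fin n → ℝ) x) = ‖x‖ ^ 2 := by
    intro x
    rw [EuclideanSpace.norm_eq]
    rw [Real.sq_sqrt (by positivity)]
    simp [dotProduct, sq]
  have ha_pos : 0 < a := by
    have hxm_ne : WithLp.equiv 2 (Fin n → ℝ) xm ≠ 0 := by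
      intro h0
      have hxm0 : xm = 0 := by
        have := congrArg (WithLp.equiv 2 (Fin n → ℝ)).symm h0
        simpa [WithLp.toLp_zero] using this
      rw [hxm0] at hxm
      simp at hxm
    simpa [ha, hf] using hQ.dotProduct_mulVec_pos hxm_ne
  have hb_pos : 0 < b := lt_of_lt_of_le ha_pos (hxmin hxM)
  refine ⟨a, ha_pos, b, hb_pos, fun x => ?_⟩
  rcases eq_or_ne x 0 with rfl | hx0
  · simp
  · set xe : EuclideanSpace ℝ (Fin n) := (WithLp.equiv 2 (Fin n → ℝ)).symm x with hxe
    have hxe0 : xe ≠ 0 := by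
      simp only [hxe, ne_eq]
      intro h0
      apply hx0
      apply_fun (WithLp.equiv 2 (Fin n → ℝ)) at h0
      simpa using h0
    have hnx : (0:ℝ) < ‖xe‖ := norm_pos_iff.mpr hxe0
    set y : EuclideanSpace ℝ (Fin n) := ‖xe‖⁻¹ • xe with hy
    have hy_sph : y ∈ Metric.sphere (0 : EuclideanSpace ℝ (Fin n)) 1 := by
      simp [hy, norm_smul, abs_of_pos (inv_pos.mpr hnx), inv_mul_cancel₀ hnx.ne']
    have hymin := hxmin hy_sph
    have hymax := hxmax hy_sph
    have hscale : (WithLp.equiv 2 (Fin n → ℝ) y) ⬝ᵥ Q *ᵥ (WithLp.equiv 2 (Fin n → ℝ) y)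
        = ‖xe‖⁻¹ ^ 2 * (x ⬝ᵥ Q *ᵥ x) := by
      have : WithLp.equiv 2 (Fin n → ℝ) y = ‖xe‖⁻¹ • x := by
        simp [hy, hxe]
      rw [this, Matrix.mulVec_smul, smul_dotProduct, dotProduct_smul]
      simp [smul_eq_mul, sq]; ring
    have hxx : x ⬝ᵥ x = ‖xe‖ ^ 2 := by
      have := hnorm_sq xe
      simpa [hxe] using this
    constructor
    · have : a ≤ ‖xe‖⁻¹ ^ 2 * (x ⬝ᵥ Q *ᵥ x) := by
        rw [← hscale]; exact hymin
      calc a * (x ⬝ᵥ x) = a * ‖xe‖ ^ 2 := by rw [hxx]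
        _ ≤ (‖xe‖⁻¹ ^ 2 * (x ⬝ᵥ Q *ᵥ x)) * ‖xe‖ ^ 2 := by
            apply mul_le_mul_of_nonneg_right this (by positivity)
        _ = x ⬝ᵥ Q *ᵥ x := by
            field_simp
    · have : ‖xe‖⁻¹ ^ 2 * (x ⬝ᵥ Q *ᵥ x) ≤ b := by
        rw [← hscale]; exact hymax
      calc x ⬝ᵥ Q *ᵥ x = (‖xe‖⁻¹ ^ 2 * (x ⬝ᵥ Q *ᵥ x)) * ‖xe‖ ^ 2 := by
            field_simp
        _ ≤ b * ‖xe‖ ^ 2 := mul_le_mul_of_nonneg_right this (by positivity)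
        _ = b * (x ⬝ᵥ x) := by rw [hxx]

lemma euclid_norm_sq (x : EuclideanSpace ℝ (Fin n)) :
    ‖x‖ ^ 2 = (WithLp.equiv 2 (Fin n → ℝ) x) ⬝ᵥ (WithLp.equiv 2 (Fin n → ℝ) x) := by
  rw [EuclideanSpace.norm_eq, Real.sq_sqrt (by positivity)]
  simp [dotProduct, sq]

lemma l2_opNorm_le_of_quad (T : Matrix (Fin n) (Fin n) ℝ) {c : ℝ} (hc : 0 ≤ c)
    (h : ∀ x : Fin n → ℝ, (T *ᵥ x) ⬝ᵥ (T *ᵥ x) ≤ c ^ 2 * (x ⬝ᵥ x)) : ‖T‖ ≤ c := by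
  rw [Matrix.cstar_norm_def]
  apply ContinuousLinearMap.opNorm_le_bound _ hc
  intro y
  have h1 : ‖(toEuclideanCLM (𝕜 := ℝ) (n := Fin n) T) y‖ ^ 2 ≤ (c * ‖y‖) ^ 2 := by
    rw [euclid_norm_sq, WithLp.equiv_apply, Matrix.ofLp_toEuclideanCLM]
    rw [mul_pow, euclid_norm_sq y]
    exact h _
  have h2 := Real.sqrt_le_sqrt h1
  rwa [Real.sqrt_sq (norm_nonneg _), Real.sqrt_sq (by positivity)] at h2

end MLFAux

/-- MLF criterion for impulsive switched systems with both stable and unstable modes and a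
compact set `𝓘` of impulses: under the Lyapunov inequalities with rates `λ_p`, `μ_p` and
impulse gains `γ_{(q,p)} ≥ 1`, and the limsup condition
`limsup_j (−λ N_s(j) τ + μ N_u(j) η + j ln γ) < 0` along a switching signal with dwell time
`τ` in stable modes and flee time `η` in unstable modes, the impulsive switched system is
stable under arbitrary impulses along this signal. -/
theorem impulsive_system_stable_of_MLF_mixed {n : ℕ} {P : Type*} [Fintype P] [DecidableEq P]
    (S U : Finset P) (hSU : S ∪ U = Finset.univ) (hdisj : Disjoint S U)
    (hS : S.Nonempty) (hU : U.Nonempty)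
    (A : P → Matrix (Fin n) (Fin n) ℝ)
    (𝓘 : Set (Matrix (Fin n) (Fin n) ℝ)) (h𝓘 : IsCompact 𝓘)
    (Q : P → Matrix (Fin n) (Fin n) ℝ) (hQ : ∀ p, (Q p).PosDef)
    (lamf muf : P → ℝ) (γf : P → P → ℝ)
    (hlamf : ∀ p ∈ S, 0 < lamf p) (hmuf : ∀ p ∈ U, 0 < muf p)
    (hγf : ∀ p q, 1 ≤ γf p q)
    (hQA_s : ∀ p ∈ S, ((-(lamf p)) • Q p - (Q p * A p + (A p)ᵀ * Q p)).PosSemidef)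
    (hQA_u : ∀ p ∈ U, ((muf p) • Q p - (Q p * A p + (A p)ᵀ * Q p)).PosSemidef)
    (hM : ∀ p q, ∀ M ∈ 𝓘, (γf q p • Q q - Mᵀ * Q p * M).PosSemidef)
    (lam mu γ : ℝ)
    (hlam_lb : ∀ p ∈ S, lam ≤ lamf p) (hlam_mem : ∃ p ∈ S, lam = lamf p)
    (hmu_ub : ∀ p ∈ U, muf p ≤ mu) (hmu_mem : ∃ p ∈ U, mu = muf p)
    (hγ_ub : ∀ p q, γf p q ≤ γ) (hγ_mem : ∃ p q, γ = γf p q)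
    (τ η : ℝ) (hτ : 0 < τ) (hη : 0 < η)
    (p : ℕ → P) (d : ℕ → ℝ)
    (hd : ∀ k, 1 ≤ k → 0 < d k)
    (hdS : ∀ k, 1 ≤ k → p (k - 1) ∈ S → τ ≤ d k)
    (hdU : ∀ k, 1 ≤ k → p (k - 1) ∈ U → d k ≤ η)
    (hlimsup : Filter.limsup (fun j : ℕ =>
        -lam * (((Finset.range j).filter fun i => p i ∈ S).card : ℝ) * τ +
          mu * (((Finset.range j).filter fun i => p i ∈ U).card : ℝ) * η +
          (j : ℝ) * Real.log γ) Filter.atTop < 0) :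
    ∃ C > (0 : ℝ), ∀ M : ℕ → Matrix (Fin n) (Fin n) ℝ, (∀ k, 1 ≤ k → M k ∈ 𝓘) →
      ∀ (j : ℕ) (s : ℝ), 0 ≤ s → s ≤ d (j + 1) →
        ‖exp (s • A (p j)) * impulsiveTransition A M p d j‖ ≤ C := by
  classical
  obtain ⟨pS, hpS, hlameq⟩ := hlam_mem
  obtain ⟨pU, hpU, hmueq⟩ := hmu_mem
  obtain ⟨pγ, qγ, hγeq⟩ := hγ_mem
  have hγ1 : 1 ≤ γ := hγeq ▸ hγf pγ qγ
  have hγ0 : (0:ℝ) < γ := lt_of_lt_of_le one_pos hγ1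
  have hmu0 : 0 < mu := hmueq ▸ hmuf pU hpU
  haveI : Nonempty P := ⟨pS⟩
  choose aQ haQ bQ hbQ hq using fun r => quad_bounds (Q r) (hQ r)
  set amin := Finset.univ.inf' Finset.univ_nonempty aQ with hamin_def
  set bmax := Finset.univ.sup' Finset.univ_nonempty bQ with hbmax_def
  have hamin_pos : 0 < amin := by
    rw [hamin_def, Finset.lt_inf'_iff]
    exact fun r _ => haQ r
  have hbmax_pos : 0 < bmax := lt_of_lt_of_le (hbQ (Classical.arbitrary P))
    (Finset.le_sup' bQ (Finset.mem_univ _))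
  have hamin_le : ∀ r, amin ≤ aQ r := fun r => Finset.inf'_le aQ (Finset.mem_univ r)
  have hbmax_ge : ∀ r, bQ r ≤ bmax := fun r => Finset.le_sup' bQ (Finset.mem_univ r)
  have hqnonneg : ∀ r (x : Fin n → ℝ), 0 ≤ x ⬝ᵥ Q r *ᵥ x :=
    fun r x => psd_quad (hQ r).posSemidef x
  set E : ℕ → ℝ := fun j : ℕ =>
    -lam * (((Finset.range j).filter fun i => p i ∈ S).card : ℝ) * τ +
      mu * (((Finset.range j).filter fun i => p i ∈ U).card : ℝ) * η +
      (j : ℝ) * Real.log γ with hEdef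
  -- recurrence for E
  have hpartition : ∀ j : ℕ, p j ∉ S → p j ∈ U := by
    intro j hpj
    have : p j ∈ S ∪ U := by rw [hSU]; exact Finset.mem_univ _
    rcases Finset.mem_union.mp this with h | h
    · exact absurd h hpj
    · exact h
  have hErec : ∀ j : ℕ, E (j + 1)
      = E j + ((if p j ∈ S then -(lam * τ) else mu * η) + Real.log γ) := by
    intro j
    have hcS : (((Finset.range (j+1)).filter fun i => p i ∈ S).card : ℝ)
        = (((Finset.range j).filter fun i => p i ∈ S).card : ℝ)
          + (if p j ∈ S then 1 else 0) := by
      rw [Finset.range_add_one, Finset.filter_insert]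
      by_cases hpj : p j ∈ S
      · rw [if_pos hpj, Finset.card_insert_of_notMem (by simp), if_pos hpj]
        push_cast; ring
      · rw [if_neg hpj, if_neg hpj]; simp
    have hcU : (((Finset.range (j+1)).filter fun i => p i ∈ U).card : ℝ)
        = (((Finset.range j).filter fun i => p i ∈ U).card : ℝ)
          + (if p j ∈ U then 1 else 0) := by
      rw [Finset.range_add_one, Finset.filter_insert]
      by_cases hpj : p j ∈ U
      · rw [if_pos hpj, Finset.card_insert_of_notMem (by simp), if_pos hpj]
        push_cast; ring
      · rw [if_neg hpj, if_neg hpj]; simp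
    simp only [hEdef]
    rw [hcS, hcU]
    by_cases hpj : p j ∈ S
    · have hpjU : p j ∉ U := fun h => (Finset.disjoint_left.mp hdisj hpj) h
      rw [if_pos hpj, if_pos hpj, if_neg hpjU]
      push_cast; ring
    · have hpjU : p j ∈ U := hpartition j hpj
      rw [if_neg hpj, if_neg hpj, if_pos hpjU]
      push_cast; ring
  -- uniform bound on exp (E j)
  obtain ⟨C1, hC1_pos, hC1⟩ : ∃ C1 > (0:ℝ), ∀ j, Real.exp (E j) ≤ C1 := by
    have hne : {x : ℝ | ∀ᶠ j in Filter.atTop, E j ≤ x}.Nonempty := by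
      by_contra hcon
      rw [Set.not_nonempty_iff_eq_empty] at hcon
      rw [Filter.limsup_eq] at hlimsup
      rw [hcon, Real.sInf_empty] at hlimsup
      exact lt_irrefl 0 hlimsup
    rw [Filter.limsup_eq] at hlimsup
    obtain ⟨α, hα_mem, hα_neg⟩ := exists_lt_of_csInf_lt hne hlimsup
    obtain ⟨N, hN⟩ := Filter.eventually_atTop.mp hα_mem
    refine ⟨1 + ∑ i ∈ Finset.range N, Real.exp (E i), by positivity, ?_⟩
    intro j
    have hsum_nonneg : (0:ℝ) ≤ ∑ i ∈ Finset.range N, Real.exp (E i) :=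
      Finset.sum_nonneg fun i _ => (Real.exp_pos _).le
    by_cases hj : j < N
    · have : Real.exp (E j) ≤ ∑ i ∈ Finset.range N, Real.exp (E i) :=
        Finset.single_le_sum (fun i _ => (Real.exp_pos _).le) (Finset.mem_range.mpr hj)
      linarith
    · have hEj : E j ≤ α := hN j (le_of_not_gt hj)
      have h1 : Real.exp (E j) ≤ 1 := by
        calc Real.exp (E j) ≤ Real.exp 0 := Real.exp_le_exp.mpr (by linarith)
          _ = 1 := Real.exp_zero
      linarith
  set K : ℝ := Real.exp (mu * η) with hKdef
  have hK_pos : 0 < K := Real.exp_pos _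
  set c2 : ℝ := K * C1 * bmax / amin with hc2def
  have hc2_pos : 0 < c2 := by positivity
  refine ⟨Real.sqrt c2, Real.sqrt_pos.mpr hc2_pos, ?_⟩
  intro M hMmem j s hs hsd
  -- the chain estimate at switching times
  have hchain : ∀ (k : ℕ) (x : Fin n → ℝ),
      (impulsiveTransition A M p d k *ᵥ x) ⬝ᵥ Q (p k) *ᵥ (impulsiveTransition A M p d k *ᵥ x)
        ≤ Real.exp (E k) * (x ⬝ᵥ Q (p 0) *ᵥ x) := by
    intro k
    induction k with
    | zero =>
      intro x
      have : E 0 = 0 := by simp [hEdef]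
      simp [impulsiveTransition, Matrix.one_mulVec, this]
    | succ k ih =>
      intro x
      have hd1 : 0 < d (k + 1) := hd (k + 1) (by omega)
      set y := impulsiveTransition A M p d k *ᵥ x with hy
      set z := exp (d (k + 1) • A (p k)) *ᵥ y with hz
      have hsplit : impulsiveTransition A M p d (k + 1) *ᵥ x = M (k + 1) *ᵥ z := by
        show (M (k + 1) * exp (d (k + 1) • A (p k)) * impulsiveTransition A M p d k) *ᵥ x
          = M (k + 1) *ᵥ z
        rw [hz, hy, Matrix.mulVec_mulVec, Matrix.mulVec_mulVec]
      rw [hsplit]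
      have himp : (M (k + 1) *ᵥ z) ⬝ᵥ Q (p (k + 1)) *ᵥ (M (k + 1) *ᵥ z)
          ≤ γ * (z ⬝ᵥ Q (p k) *ᵥ z) := by
        have h1 := impulse_bound
          (hM (p (k + 1)) (p k) (M (k + 1)) (hMmem (k + 1) (by omega))) z
        have h2 := hγ_ub (p k) (p (k + 1))
        nlinarith [hqnonneg (p k) z]
      have hflow : z ⬝ᵥ Q (p k) *ᵥ z
          ≤ (if p k ∈ S then Real.exp (-(lam * τ)) else Real.exp (mu * η))
            * (y ⬝ᵥ Q (p k) *ᵥ y) := by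
        by_cases hpj : p k ∈ S
        · rw [if_pos hpj]
          have hf := flow_bound (Q (p k)) (A (p k)) (-(lamf (p k)))
            (hQA_s (p k) hpj) y hd1.le
          have hτd : τ ≤ d (k + 1) := hdS (k + 1) (by omega) (by simpa using hpj)
          have hexp : Real.exp (-(lamf (p k)) * d (k + 1)) ≤ Real.exp (-(lam * τ)) := by
            apply Real.exp_le_exp.mpr
            nlinarith [hlamf _ hpj, hlam_lb _ hpj]
          exact hf.trans (mul_le_mul_of_nonneg_right hexp (hqnonneg _ y))
        · rw [if_neg hpj]
          have hpjU : p k ∈ U := hpartition k hpj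
          have hf := flow_bound (Q (p k)) (A (p k)) (muf (p k))
            (hQA_u (p k) hpjU) y hd1.le
          have hdη : d (k + 1) ≤ η := hdU (k + 1) (by omega) (by simpa using hpjU)
          have hexp : Real.exp (muf (p k) * d (k + 1)) ≤ Real.exp (mu * η) := by
            apply Real.exp_le_exp.mpr
            nlinarith [hmuf _ hpjU, hmu_ub _ hpjU]
          exact hf.trans (mul_le_mul_of_nonneg_right hexp (hqnonneg _ y))
      have hite_pos : (0:ℝ) <
          (if p k ∈ S then Real.exp (-(lam * τ)) else Real.exp (mu * η)) := by
        split <;> exact Real.exp_pos _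
      have hEstep : Real.exp (E (k + 1))
          = γ * ((if p k ∈ S then Real.exp (-(lam * τ)) else Real.exp (mu * η))
            * Real.exp (E k)) := by
        rw [hErec k]
        by_cases hpj : p k ∈ S
        · simp only [if_pos hpj, Real.exp_add, Real.exp_log hγ0]; ring
        · simp only [if_neg hpj, Real.exp_add, Real.exp_log hγ0]; ring
      calc (M (k + 1) *ᵥ z) ⬝ᵥ Q (p (k + 1)) *ᵥ (M (k + 1) *ᵥ z)
          ≤ γ * (z ⬝ᵥ Q (p k) *ᵥ z) := himp
        _ ≤ γ * ((if p k ∈ S then Real.exp (-(lam * τ)) else Real.exp (mu * η))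
            * (y ⬝ᵥ Q (p k) *ᵥ y)) := mul_le_mul_of_nonneg_left hflow hγ0.le
        _ ≤ γ * ((if p k ∈ S then Real.exp (-(lam * τ)) else Real.exp (mu * η))
            * (Real.exp (E k) * (x ⬝ᵥ Q (p 0) *ᵥ x))) := by
            apply mul_le_mul_of_nonneg_left _ hγ0.le
            exact mul_le_mul_of_nonneg_left (ih x) hite_pos.le
        _ = Real.exp (E (k + 1)) * (x ⬝ᵥ Q (p 0) *ᵥ x) := by rw [hEstep]; ring
  -- within-interval estimate and conclusion
  apply l2_opNorm_le_of_quad _ (Real.sqrt_nonneg c2)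
  intro x
  rw [Real.sq_sqrt hc2_pos.le]
  set y := impulsiveTransition A M p d j *ᵥ x with hy
  set w := exp (s • A (p j)) *ᵥ y with hw
  have hTw : (exp (s • A (p j)) * impulsiveTransition A M p d j) *ᵥ x = w := by
    rw [hw, hy, Matrix.mulVec_mulVec]
  rw [hTw]
  have hflow_s : w ⬝ᵥ Q (p j) *ᵥ w ≤ K * (y ⬝ᵥ Q (p j) *ᵥ y) := by
    by_cases hpj : p j ∈ S
    · have hf := flow_bound (Q (p j)) (A (p j)) (-(lamf (p j)))
        (hQA_s (p j) hpj) y hs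
      have hexp : Real.exp (-(lamf (p j)) * s) ≤ K := by
        rw [hKdef]
        apply Real.exp_le_exp.mpr
        nlinarith [hlamf _ hpj, hmu0.le, hη.le]
      exact hf.trans (mul_le_mul_of_nonneg_right hexp (hqnonneg _ y))
    · have hpjU : p j ∈ U := hpartition j hpj
      have hf := flow_bound (Q (p j)) (A (p j)) (muf (p j))
        (hQA_u (p j) hpjU) y hs
      have hdη : d (j + 1) ≤ η := hdU (j + 1) (by omega) (by simpa using hpjU)
      have hexp : Real.exp (muf (p j) * s) ≤ K := by
        rw [hKdef]
        apply Real.exp_le_exp.mpr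
        nlinarith [hmuf _ hpjU, hmu_ub _ hpjU]
      exact hf.trans (mul_le_mul_of_nonneg_right hexp (hqnonneg _ y))
  have hchain_j := hchain j x
  have hww : (0:ℝ) ≤ w ⬝ᵥ w := by simpa using dotProduct_star_self_nonneg w
  have hxx : (0:ℝ) ≤ x ⬝ᵥ x := by simpa using dotProduct_star_self_nonneg x
  have hlow : amin * (w ⬝ᵥ w) ≤ w ⬝ᵥ Q (p j) *ᵥ w :=
    le_trans (mul_le_mul_of_nonneg_right (hamin_le (p j)) hww) (hq (p j) w).1
  have hup : x ⬝ᵥ Q (p 0) *ᵥ x ≤ bmax * (x ⬝ᵥ x) :=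
    le_trans (hq (p 0) x).2 (mul_le_mul_of_nonneg_right (hbmax_ge (p 0)) hxx)
  have hmid : w ⬝ᵥ Q (p j) *ᵥ w ≤ K * C1 * (x ⬝ᵥ Q (p 0) *ᵥ x) := by
    have h1 : K * (y ⬝ᵥ Q (p j) *ᵥ y) ≤ K * (Real.exp (E j) * (x ⬝ᵥ Q (p 0) *ᵥ x)) :=
      mul_le_mul_of_nonneg_left hchain_j hK_pos.le
    have h2 : Real.exp (E j) * (x ⬝ᵥ Q (p 0) *ᵥ x) ≤ C1 * (x ⬝ᵥ Q (p 0) *ᵥ x) :=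
      mul_le_mul_of_nonneg_right (hC1 j) (hqnonneg _ x)
    have h3 : K * (Real.exp (E j) * (x ⬝ᵥ Q (p 0) *ᵥ x))
        ≤ K * (C1 * (x ⬝ᵥ Q (p 0) *ᵥ x)) :=
      mul_le_mul_of_nonneg_left h2 hK_pos.le
    have h4 : K * (C1 * (x ⬝ᵥ Q (p 0) *ᵥ x)) = K * C1 * (x ⬝ᵥ Q (p 0) *ᵥ x) := by ring
    linarith
  have hfinal : amin * (w ⬝ᵥ w) ≤ K * C1 * bmax * (x ⬝ᵥ x) := by
    have h3 : K * C1 * (x ⬝ᵥ Q (p 0) *ᵥ x) ≤ K * C1 * (bmax * (x ⬝ᵥ x)) :=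
      mul_le_mul_of_nonneg_left hup (by positivity)
    have h4 : K * C1 * (bmax * (x ⬝ᵥ x)) = K * C1 * bmax * (x ⬝ᵥ x) := by ring
    linarith
  rw [hc2def, div_mul_eq_mul_div, le_div_iff₀ hamin_pos]
  calc (w ⬝ᵥ w) * amin = amin * (w ⬝ᵥ w) := by ring
    _ ≤ K * C1 * bmax * (x ⬝ᵥ x) := hfinal
end
end

section
/- Let A be an n×n real matrix, τ > 0, let Q be a symmetric positive semidefinite n×n real matrix and Q' a symmetric n×n real matrix, and let M_1, …, M_k be n×n real matrices. Then the linear matrix inequality exp(τ·A)ᵀ·Mᵀ·Q·M·exp(τ·A) ⪯ Q' holds for every M in the convex hull of {M_1, …, M_k} if and only if it holds for each M = M_i, i = 1, …, k. -/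
open Matrix NormedSpace

lemma posSemidef_smul_nonneg {m : ℕ} {P : Matrix (Fin m) (Fin m) ℝ}
    (hP : P.PosSemidef) {a : ℝ} (ha : 0 ≤ a) : (a • P).PosSemidef := by
  refine ⟨?_, fun x => ?_⟩
  · show (a • P)ᴴ = a • P
    rw [conjTranspose_smul, hP.1.eq]
    simp
  have := hP.2 x
  simp only [Finsupp.sum, Matrix.smul_apply, smul_eq_mul]
  convert mul_nonneg ha this using 1
  simp only [Finsupp.sum, Finset.mul_sum]
  exact Finset.sum_congr rfl fun i _ => Finset.sum_congr rfl fun j _ => by change star (x i) * (a * P i j) * x j = _; ring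

/-- The LMI `exp(τA)ᵀ Mᵀ Q M exp(τA) ⪯ Q'` holds for every `M` in the convex hull of
`M_1, …, M_k` if and only if it holds at each vertex `M_i`. -/
theorem lmi_convexHull_iff_vertices {n k : ℕ} (A : Matrix (Fin n) (Fin n) ℝ)
    (τ : ℝ) (hτ : 0 < τ)
    (Q Q' : Matrix (Fin n) (Fin n) ℝ) (hQ : Q.PosSemidef) (hQ' : Q'.IsSymm)
    (M : Fin k → Matrix (Fin n) (Fin n) ℝ) :
    (∀ N ∈ convexHull ℝ (Set.range M),
        (Q' - (exp (τ • A))ᵀ * Nᵀ * Q * N * exp (τ • A)).PosSemidef) ↔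
      ∀ i, (Q' - (exp (τ • A))ᵀ * (M i)ᵀ * Q * M i * exp (τ • A)).PosSemidef := by
  set E := exp (τ • A) with hE
  constructor
  · intro h i
    exact h (M i) (subset_convexHull ℝ _ ⟨i, rfl⟩)
  · intro h N hN
    have key : convexHull ℝ (Set.range M) ⊆
        {N : Matrix (Fin n) (Fin n) ℝ | (Q' - Eᵀ * Nᵀ * Q * N * E).PosSemidef} := by
      apply convexHull_min
      · rintro _ ⟨i, rfl⟩; exact h i
      · rintro N₁ h₁ N₂ h₂ a b ha hb hab
        simp only [Set.mem_setOf_eq] at h₁ h₂ ⊢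
        have hD : (((N₁ - N₂) * E)ᵀ * Q * ((N₁ - N₂) * E)).PosSemidef := by
          have := hQ.conjTranspose_mul_mul_same ((N₁ - N₂) * E)
          simpa using this
        have hid : Q' - Eᵀ * (a • N₁ + b • N₂)ᵀ * Q * (a • N₁ + b • N₂) * E
            = a • (Q' - Eᵀ * N₁ᵀ * Q * N₁ * E) + b • (Q' - Eᵀ * N₂ᵀ * Q * N₂ * E)
              + (a * b) • (((N₁ - N₂) * E)ᵀ * Q * ((N₁ - N₂) * E)) := by
          have hb' : b = 1 - a := by linarith
          subst hb'
          simp only [transpose_add, transpose_smul, transpose_sub, transpose_mul,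
            Matrix.add_mul, Matrix.mul_add, Matrix.sub_mul, Matrix.mul_sub,
            Matrix.smul_mul, Matrix.mul_smul, smul_sub, smul_add, smul_smul, mul_assoc]
          module
        rw [hid]
        exact ((posSemidef_smul_nonneg h₁ ha).add (posSemidef_smul_nonneg h₂ hb)).add
          (posSemidef_smul_nonneg hD (mul_nonneg ha hb))
    exact key hN
end

section
/- Let P be a finite index set, (A_p)_{p∈P} a family of n×n real matrices, and (R_{(p,q)})_{p,q∈P} reset matrices. Suppose that for some positive constants (τ_p)_{p∈P} there exists a collection of symmetric positive definite matrices (Q_p)_{p∈P} such that Q_p·A_p + A_pᵀ·Q_p is negative definite for all p ∈ P, and exp(τ_q·A_q)ᵀ·R_{(q,p)}ᵀ·Q_p·R_{(q,p)}·exp(τ_q·A_q) ⪯ Q_q for all p, q ∈ P. Then there exists C > 0 such that for every j ≥ 0, every switching sequence p_0, …, p_j ∈ P, all durations d_1, …, d_j with d_k ≥ τ_{p_{k−1}} for 1 ≤ k ≤ j, and every s ≥ 0, one has ‖exp(s·A_{p_j})·Φ_j‖ ≤ C; that is, the reset switched system is stable for every switching signal with mode-dependent dwell times (τ_p)_{p∈P}.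 -/
open Matrix NormedSpace
open scoped Matrix.Norms.L2Operator

noncomputable section

namespace ResetAux

variable {n : ℕ}

lemma dot_shift (B : Matrix (Fin n) (Fin n) ℝ) (y w : Fin n → ℝ) :
    y ⬝ᵥ (Bᵀ *ᵥ w) = (B *ᵥ y) ⬝ᵥ w := by
  rw [Matrix.dotProduct_mulVec, Matrix.vecMul_transpose]

lemma hasDerivAt_entry (A B : Matrix (Fin n) (Fin n) ℝ) (x : Fin n → ℝ) (i : Fin n) (t : ℝ) :
    HasDerivAt (fun s : ℝ => ((B * exp (s • A)) *ᵥ x) i)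
      (((B * (A * exp (t • A))) *ᵥ x) i) t := by
  let L : Matrix (Fin n) (Fin n) ℝ →ₗ[ℝ] ℝ :=
    { toFun := fun M => ((B * M) *ᵥ x) i
      map_add' := by intro M N; simp [mul_add, Matrix.add_mulVec]
      map_smul' := by intro c M; simp [mul_smul_comm, Matrix.smul_mulVec] }
  have hL := (LinearMap.toContinuousLinearMap L).hasFDerivAt (x := exp (t • A))
  exact hL.comp_hasDerivAt t (hasDerivAt_exp_smul_const' A t)

lemma quad_decay (A Qm : Matrix (Fin n) (Fin n) ℝ)
    (hneg : (-(Qm * A + Aᵀ * Qm)).PosSemidef) (x : Fin n → ℝ) {s : ℝ} (hs : 0 ≤ s) :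
    (exp (s • A) *ᵥ x) ⬝ᵥ (Qm *ᵥ (exp (s • A) *ᵥ x)) ≤ x ⬝ᵥ (Qm *ᵥ x) := by
  set f : ℝ → ℝ :=
    fun t => ((1 * exp (t • A)) *ᵥ x) ⬝ᵥ ((Qm * exp (t • A)) *ᵥ x) with hf
  have key : ∀ t : ℝ, HasDerivAt f
      ((((1 * (A * exp (t • A))) *ᵥ x) ⬝ᵥ ((Qm * exp (t • A)) *ᵥ x))
        + (((1 * exp (t • A)) *ᵥ x) ⬝ᵥ ((Qm * (A * exp (t • A))) *ᵥ x))) t := by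
    intro t
    have h1 := HasDerivAt.sum (u := (Finset.univ : Finset (Fin n)))
      (fun i _ => ((hasDerivAt_entry A 1 x i t).mul (hasDerivAt_entry A Qm x i t)))
    convert h1 using 1
    · rfl
    · rfl
    · ext s; simp [hf, dotProduct, Finset.sum_apply]
    · simp [dotProduct, Finset.sum_add_distrib]
  have hderiv_nonpos : ∀ t : ℝ, deriv f t ≤ 0 := by
    intro t
    rw [(key t).deriv]
    set y := exp (t • A) *ᵥ x with hy
    have e1 : ((1 * (A * exp (t • A))) *ᵥ x) ⬝ᵥ ((Qm * exp (t • A)) *ᵥ x)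
        = y ⬝ᵥ ((Aᵀ * Qm) *ᵥ y) := by
      rw [one_mul, ← Matrix.mulVec_mulVec, ← Matrix.mulVec_mulVec, ← Matrix.mulVec_mulVec,
        dot_shift, ← hy]
    have e2 : ((1 * exp (t • A)) *ᵥ x) ⬝ᵥ ((Qm * (A * exp (t • A))) *ᵥ x)
        = y ⬝ᵥ ((Qm * A) *ᵥ y) := by
      rw [one_mul, ← Matrix.mulVec_mulVec, ← Matrix.mulVec_mulVec, Matrix.mulVec_mulVec]
    rw [e1, e2]
    have h0 := hneg.dotProduct_mulVec_nonneg y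
    simp only [star_trivial, Matrix.neg_mulVec, dotProduct_neg, Matrix.add_mulVec,
      dotProduct_add] at h0
    linarith
  have hdiff : Differentiable ℝ f := fun t => (key t).differentiableAt
  have hanti := antitone_of_deriv_nonpos hdiff hderiv_nonpos
  have hle := hanti hs
  have hf0 : f 0 = x ⬝ᵥ (Qm *ᵥ x) := by
    simp [hf, zero_smul, exp_zero, Matrix.one_mulVec]
  have hfs : f s = (exp (s • A) *ᵥ x) ⬝ᵥ (Qm *ᵥ (exp (s • A) *ᵥ x)) := by
    simp [hf, Matrix.mulVec_mulVec]
  rw [← hfs, ← hf0]; exact hle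

lemma quad_jump {E Qp Qq : Matrix (Fin n) (Fin n) ℝ}
    (h : (Qq - Eᵀ * Qp * E).PosSemidef) (x : Fin n → ℝ) :
    (E *ᵥ x) ⬝ᵥ (Qp *ᵥ (E *ᵥ x)) ≤ x ⬝ᵥ (Qq *ᵥ x) := by
  have h0 := h.dotProduct_mulVec_nonneg x
  simp only [star_trivial, Matrix.sub_mulVec, dotProduct_sub] at h0
  have heq : x ⬝ᵥ ((Eᵀ * Qp * E) *ᵥ x) = (E *ᵥ x) ⬝ᵥ (Qp *ᵥ (E *ᵥ x)) := by
    rw [mul_assoc, ← Matrix.mulVec_mulVec, dot_shift, ← Matrix.mulVec_mulVec]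
  linarith

lemma norm_sq_eq_dot (v : Fin n → ℝ) :
    ‖(WithLp.equiv 2 (Fin n → ℝ)).symm v‖ ^ 2 = v ⬝ᵥ v := by
  rw [EuclideanSpace.norm_eq, Real.sq_sqrt (by positivity)]
  simp [dotProduct, Real.norm_eq_abs, sq_abs, pow_two]

lemma mulVec_norm_le (M : Matrix (Fin n) (Fin n) ℝ) (v : Fin n → ℝ) :
    ‖(WithLp.equiv 2 (Fin n → ℝ)).symm (M *ᵥ v)‖
      ≤ ‖M‖ * ‖(WithLp.equiv 2 (Fin n → ℝ)).symm v‖ :=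
  Matrix.l2_opNorm_mulVec M ((WithLp.equiv 2 (Fin n → ℝ)).symm v)

lemma opNorm_le_of_forall (M : Matrix (Fin n) (Fin n) ℝ) {C : ℝ} (hC : 0 ≤ C)
    (h : ∀ v : Fin n → ℝ, ‖(WithLp.equiv 2 (Fin n → ℝ)).symm (M *ᵥ v)‖
      ≤ C * ‖(WithLp.equiv 2 (Fin n → ℝ)).symm v‖) : ‖M‖ ≤ C := by
  rw [Matrix.l2_opNorm_def]
  refine ContinuousLinearMap.opNorm_le_bound _ hC fun x => ?_
  have hx : ((Matrix.toEuclideanLin.trans LinearMap.toContinuousLinearMap) M) x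
      = (WithLp.equiv 2 (Fin n → ℝ)).symm (M *ᵥ (WithLp.equiv 2 (Fin n → ℝ)) x) := rfl
  rw [hx]
  simpa using h ((WithLp.equiv 2 (Fin n → ℝ)) x)

end ResetAux

open scoped MatrixOrder

/-- Mode-dependent MLF dwell time criterion for reset switched systems: if there are
symmetric positive definite `Q_p` with `Q_p A_p + A_pᵀ Q_p` negative definite and
`exp(τ_q A_q)ᵀ R_{(q,p)}ᵀ Q_p R_{(q,p)} exp(τ_q A_q) ⪯ Q_q` for all `p, q`, then the reset
switched system is stable for every switching signal with mode-dependent dwell times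
`(τ_p)`. -/
theorem reset_system_stable_of_MLF_mode_dependent_dwell {n : ℕ} {P : Type*} [Fintype P]
    (A : P → Matrix (Fin n) (Fin n) ℝ)
    (R : P → P → Matrix (Fin n) (Fin n) ℝ)
    (τ : P → ℝ) (hτ : ∀ p, 0 < τ p)
    (Q : P → Matrix (Fin n) (Fin n) ℝ)
    (hQ : ∀ p, (Q p).PosDef)
    (hQA : ∀ p, (-(Q p * A p + (A p)ᵀ * Q p)).PosDef)
    (hLMI : ∀ p q, (Q q -
      (exp (τ q • A q))ᵀ * (R q p)ᵀ * Q p * R q p * exp (τ q • A q)).PosSemidef) :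
    ∃ C > (0 : ℝ), ∀ (j : ℕ) (p : ℕ → P) (d : ℕ → ℝ),
      (∀ k, 1 ≤ k → k ≤ j → τ (p (k - 1)) ≤ d k) →
      ∀ s : ℝ, 0 ≤ s →
        ‖exp (s • A (p j)) * resetTransition A R p d j‖ ≤ C := by
  classical
  set S : P → Matrix (Fin n) (Fin n) ℝ := fun p => CFC.sqrt (Q p) with hSdef
  have hSS : ∀ p, S p * S p = Q p := fun p => CFC.sqrt_mul_sqrt_self (Q p) (hQ p).posSemidef.nonneg
  have hSH : ∀ p, (S p)ᵀ = S p := by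
    intro p
    have h := (CFC.sqrt_nonneg (Q p)).posSemidef.1.eq
    rwa [Matrix.conjTranspose_eq_transpose_of_trivial] at h
  have hSdet : ∀ p, IsUnit (S p).det := by
    intro p
    have h1 : IsUnit (S p * S p).det := by
      rw [hSS]; exact (Matrix.isUnit_iff_isUnit_det _).1 (hQ p).isUnit
    rw [Matrix.det_mul] at h1
    exact isUnit_of_mul_isUnit_left h1
  have hSinv : ∀ p (v : Fin n → ℝ), (S p)⁻¹ *ᵥ (S p *ᵥ v) = v := by
    intro p v
    rw [Matrix.mulVec_mulVec, Matrix.nonsing_inv_mul _ (hSdet p), Matrix.one_mulVec]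
  have hV : ∀ p (v : Fin n → ℝ), v ⬝ᵥ (Q p *ᵥ v) = (S p *ᵥ v) ⬝ᵥ (S p *ᵥ v) := by
    intro p v
    have h := ResetAux.dot_shift (S p) v (S p *ᵥ v)
    rw [hSH] at h
    rw [← hSS p, ← Matrix.mulVec_mulVec, h]
  have hdecay : ∀ p (v : Fin n → ℝ) {s : ℝ}, 0 ≤ s →
      (exp (s • A p) *ᵥ v) ⬝ᵥ (Q p *ᵥ (exp (s • A p) *ᵥ v)) ≤ v ⬝ᵥ (Q p *ᵥ v) :=
    fun p v _ hs => ResetAux.quad_decay (A p) (Q p) (hQA p).posSemidef v hs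
  have hjump : ∀ q p' (v : Fin n → ℝ),
      ((R q p' * exp (τ q • A q)) *ᵥ v) ⬝ᵥ (Q p' *ᵥ ((R q p' * exp (τ q • A q)) *ᵥ v))
        ≤ v ⬝ᵥ (Q q *ᵥ v) := by
    intro q p' v
    refine ResetAux.quad_jump ?_ v
    have h := hLMI p' q
    rwa [show (exp (τ q • A q))ᵀ * (R q p')ᵀ * Q p' * R q p' * exp (τ q • A q)
        = (R q p' * exp (τ q • A q))ᵀ * Q p' * (R q p' * exp (τ q • A q)) from by
      rw [Matrix.transpose_mul]; simp only [mul_assoc]] at h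
  have main : ∀ (p : ℕ → P) (d : ℕ → ℝ) (j : ℕ),
      (∀ k, 1 ≤ k → k ≤ j → τ (p (k - 1)) ≤ d k) →
      ∀ v : Fin n → ℝ,
        (resetTransition A R p d j *ᵥ v) ⬝ᵥ (Q (p j) *ᵥ (resetTransition A R p d j *ᵥ v))
          ≤ v ⬝ᵥ (Q (p 0) *ᵥ v) := by
    intro p d j
    induction j with
    | zero => intro _ v; simp [resetTransition, Matrix.one_mulVec]
    | succ j ih =>
      intro hd v
      have ihv := ih (fun k h1 h2 => hd k h1 (h2.trans (Nat.le_succ j))) v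
      have hdj : τ (p j) ≤ d (j + 1) := by
        simpa using hd (j + 1) (Nat.le_add_left 1 j) le_rfl
      have hτd : τ (p j) + (d (j + 1) - τ (p j)) = d (j + 1) := by ring
      have hc : Commute (τ (p j) • A (p j)) ((d (j + 1) - τ (p j)) • A (p j)) :=
        ((Commute.refl (A (p j))).smul_left _).smul_right _
      have hsplit : exp (d (j + 1) • A (p j))
          = exp (τ (p j) • A (p j)) * exp ((d (j + 1) - τ (p j)) • A (p j)) := by
        rw [← Matrix.exp_add_of_commute _ _ hc, ← add_smul, hτd]
      set Φ := resetTransition A R p d j with hΦ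
      set z := exp ((d (j + 1) - τ (p j)) • A (p j)) *ᵥ (Φ *ᵥ v) with hz
      have t1 := hjump (p j) (p (j + 1)) z
      have t2 := hdecay (p j) (Φ *ᵥ v) (sub_nonneg.2 hdj)
      have hrw : resetTransition A R p d (j + 1) *ᵥ v
          = (R (p j) (p (j + 1)) * exp (τ (p j) • A (p j))) *ᵥ z := by
        show (R (p j) (p (j + 1)) * exp (d (j + 1) • A (p j)) * Φ) *ᵥ v = _
        simp only [hz, Matrix.mulVec_mulVec, hsplit, mul_assoc]
      rw [hrw]
      exact le_trans t1 (le_trans t2 ihv)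
  set c1 : ℝ := ⨆ p' : P, ‖(S p')⁻¹‖ with hc1def
  set c2 : ℝ := ⨆ p' : P, ‖S p'‖ with hc2def
  have hb1 : BddAbove (Set.range fun p' : P => ‖(S p')⁻¹‖) :=
    Set.Finite.bddAbove (Set.finite_range _)
  have hb2 : BddAbove (Set.range fun p' : P => ‖S p'‖) :=
    Set.Finite.bddAbove (Set.finite_range _)
  have hc1 : 0 ≤ c1 := by
    rcases isEmpty_or_nonempty P with hP | hP
    · rw [hc1def, iSup_of_empty', Real.sSup_empty]
    · exact le_trans (norm_nonneg _) (le_ciSup hb1 (Classical.arbitrary P))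
  have hc2 : 0 ≤ c2 := by
    rcases isEmpty_or_nonempty P with hP | hP
    · rw [hc2def, iSup_of_empty', Real.sSup_empty]
    · exact le_trans (norm_nonneg _) (le_ciSup hb2 (Classical.arbitrary P))
  have hC0 : (0 : ℝ) < 1 + c1 * c2 := by nlinarith
  refine ⟨1 + c1 * c2, hC0, ?_⟩
  intro j p d hd s hs
  refine ResetAux.opNorm_le_of_forall _ hC0.le ?_
  intro v
  set M := exp (s • A (p j)) * resetTransition A R p d j with hM
  set u := M *ᵥ v with hu
  have h1 : ‖(WithLp.equiv 2 (Fin n → ℝ)).symm u‖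
      ≤ ‖(S (p j))⁻¹‖ * ‖(WithLp.equiv 2 (Fin n → ℝ)).symm (S (p j) *ᵥ u)‖ := by
    conv_lhs => rw [← hSinv (p j) u]
    exact ResetAux.mulVec_norm_le _ _
  have hVchain : u ⬝ᵥ (Q (p j) *ᵥ u) ≤ v ⬝ᵥ (Q (p 0) *ᵥ v) := by
    have hu' : u = exp (s • A (p j)) *ᵥ (resetTransition A R p d j *ᵥ v) := by
      rw [hu, hM, ← Matrix.mulVec_mulVec]
    rw [hu']
    exact le_trans (hdecay (p j) _ hs) (main p d j hd v)
  have h2 : ‖(WithLp.equiv 2 (Fin n → ℝ)).symm (S (p j) *ᵥ u)‖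
      ≤ ‖(WithLp.equiv 2 (Fin n → ℝ)).symm (S (p 0) *ᵥ v)‖ := by
    have hsq : ‖(WithLp.equiv 2 (Fin n → ℝ)).symm (S (p j) *ᵥ u)‖ ^ 2
        ≤ ‖(WithLp.equiv 2 (Fin n → ℝ)).symm (S (p 0) *ᵥ v)‖ ^ 2 := by
      rw [ResetAux.norm_sq_eq_dot, ResetAux.norm_sq_eq_dot, ← hV, ← hV]
      exact hVchain
    nlinarith [norm_nonneg ((WithLp.equiv 2 (Fin n → ℝ)).symm (S (p j) *ᵥ u)),
      norm_nonneg ((WithLp.equiv 2 (Fin n → ℝ)).symm (S (p 0) *ᵥ v))]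
  have h3 : ‖(WithLp.equiv 2 (Fin n → ℝ)).symm (S (p 0) *ᵥ v)‖
      ≤ ‖S (p 0)‖ * ‖(WithLp.equiv 2 (Fin n → ℝ)).symm v‖ := ResetAux.mulVec_norm_le _ _
  have h4 : ‖(S (p j))⁻¹‖ ≤ c1 := le_ciSup hb1 (p j)
  have h5 : ‖S (p 0)‖ ≤ c2 := le_ciSup hb2 (p 0)
  have hnv : (0:ℝ) ≤ ‖(WithLp.equiv 2 (Fin n → ℝ)).symm v‖ := norm_nonneg _
  calc ‖(WithLp.equiv 2 (Fin n → ℝ)).symm u‖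
      ≤ ‖(S (p j))⁻¹‖ * ‖(WithLp.equiv 2 (Fin n → ℝ)).symm (S (p j) *ᵥ u)‖ := h1
    _ ≤ c1 * (c2 * ‖(WithLp.equiv 2 (Fin n → ℝ)).symm v‖) :=
        mul_le_mul h4 (le_trans (le_trans h2 h3) (mul_le_mul_of_nonneg_right h5 hnv))
          (norm_nonneg _) hc1
    _ ≤ (1 + c1 * c2) * ‖(WithLp.equiv 2 (Fin n → ℝ)).symm v‖ := by nlinarith
end
end

section
/- Let P be a finite index set partitioned into sets 𝔰 and 𝔲 (the indices of the stable and unstable subsystems), let (A_p)_{p∈P} be n×n real matrices and (R_{(p,q)})_{p,q∈P} reset matrices. Suppose there exist symmetric positive definite matrices (Q_p)_{p∈P} and positive constants λ_p (p ∈ 𝔰), μ_p (p ∈ 𝔲), and γ_{(q,p)} (p,q ∈ P) such that Q_p·A_p + A_pᵀ·Q_p ⪯ −λ_p·Q_p for all p ∈ 𝔰, Q_p·A_p + A_pᵀ·Q_p ⪯ μ_p·Q_p for all p ∈ 𝔲, and R_{(q,p)}ᵀ·Q_p·R_{(q,p)} ⪯ γ_{(q,p)}·Q_q for all p, q ∈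 P. Set γ = max_{p,q∈P} γ_{(q,p)}. Let (τ_p)_{p∈𝔰} and (η_p)_{p∈𝔲} be positive constants, let p : ℕ → P be an infinite switching sequence and d_1, d_2, … positive durations with d_k ≥ τ_{p_{k−1}} whenever p_{k−1} ∈ 𝔰 and d_k ≤ η_{p_{k−1}} whenever p_{k−1} ∈ 𝔲, and for each p ∈ P set N^p(j) = #{0 ≤ i < j : p_i = p}. If limsup_{j→∞} ( −Σ_{p∈𝔰} λ_p·N^p(j)·τ_p + Σ_{p∈𝔲} μ_p·N^p(j)·η_p + j·ln γ ) < 0, then there exists C > 0 such that ‖exp(s·A_{p_j})·Φ_j‖ ≤ C for every j ≥ 0 and every s with 0 ≤ s ≤ d_{j+1}; that is, the reset switched system is stable along this switching signal with mode-dependent dwell times (τ_p)_{p∈𝔰} and mode-dependent flee times (η_p)_{p∈𝔲}. -/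
open Matrix NormedSpace
open scoped Matrix.Norms.L2Operator

noncomputable section

namespace RSSAux

lemma euclid_norm_sq (v : Fin n → ℝ) :
    ‖(WithLp.equiv 2 (Fin n → ℝ)).symm v‖ ^ 2 = v ⬝ᵥ v := by
  rw [← real_inner_self_eq_norm_sq]
  rw [real_inner_self_eq_norm_sq, EuclideanSpace.norm_sq_eq]
  simp [dotProduct, sq]

lemma sq_le_sq_imp {a b : ℝ} (hb : 0 ≤ b) (h : a ^ 2 ≤ b ^ 2) : a ≤ b := by nlinarith

lemma l2_opNorm_le_of_dotProduct (M : Matrix (Fin n) (Fin n) ℝ) {c : ℝ}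
    (h : ∀ x : Fin n → ℝ, (M *ᵥ x) ⬝ᵥ (M *ᵥ x) ≤ c ^ 2 * (x ⬝ᵥ x)) (hc : 0 ≤ c) :
    ‖M‖ ≤ c := by
  rw [Matrix.l2_opNorm_def]
  apply ContinuousLinearMap.opNorm_le_bound _ hc
  intro x
  simp only [LinearEquiv.trans_apply, LinearMap.coe_toContinuousLinearMap',
    Matrix.toEuclideanLin_apply]
  apply sq_le_sq_imp (mul_nonneg hc (norm_nonneg _))
  rw [show WithLp.toLp 2 (M *ᵥ x.ofLp) = (WithLp.equiv 2 (Fin n → ℝ)).symm (M *ᵥ x.ofLp) from rfl,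
    euclid_norm_sq]
  set y := (WithLp.equiv 2 (Fin n → ℝ)) x with hy
  have hxy : (c * ‖x‖)^2 = c^2 * (y ⬝ᵥ y) := by
    have h1 : ((WithLp.equiv 2 (Fin n → ℝ)).symm y) = x := rfl
    rw [← h1, mul_pow, euclid_norm_sq]
  rw [hxy]; exact h y

lemma dotProduct_mulVec_self_le' (M : Matrix (Fin n) (Fin n) ℝ) (x : Fin n → ℝ) :
    (M *ᵥ x) ⬝ᵥ (M *ᵥ x) ≤ ‖M‖ ^ 2 * (x ⬝ᵥ x) := by
  have h := M.l2_opNorm_mulVec ((WithLp.equiv 2 (Fin n → ℝ)).symm x)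
  rw [← euclid_norm_sq, ← euclid_norm_sq]
  calc ‖(WithLp.equiv 2 (Fin n → ℝ)).symm (M *ᵥ x)‖ ^ 2
      ≤ (‖M‖ * ‖(WithLp.equiv 2 (Fin n → ℝ)).symm x‖) ^ 2 := by
        apply pow_le_pow_left₀ (norm_nonneg _)
        exact h
    _ = ‖M‖ ^ 2 * ‖(WithLp.equiv 2 (Fin n → ℝ)).symm x‖ ^ 2 := by ring

lemma dot_self_nonneg (x : Fin n → ℝ) : 0 ≤ x ⬝ᵥ x :=
  Finset.sum_nonneg fun _ _ => mul_self_nonneg _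

lemma transpose_eq_of_herm {B : Matrix (Fin n) (Fin n) ℝ} (h : B.IsHermitian) : Bᵀ = B := by
  simpa [Matrix.IsSymm] using h

lemma dot_sym_mulVec {B : Matrix (Fin n) (Fin n) ℝ} (hB : Bᵀ = B) (x z : Fin n → ℝ) :
    x ⬝ᵥ (B *ᵥ z) = (B *ᵥ x) ⬝ᵥ z := by
  rw [Matrix.dotProduct_mulVec, ← hB, Matrix.vecMul_transpose, hB]

lemma quad_nonneg {Q : Matrix (Fin n) (Fin n) ℝ} (hQ : Q.PosSemidef) (x : Fin n → ℝ) :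
    0 ≤ x ⬝ᵥ Q *ᵥ x := by
  have := hQ.dotProduct_mulVec_nonneg x
  simpa using this

open scoped MatrixOrder in
lemma posDef_dotProduct_bounds (Q : Matrix (Fin n) (Fin n) ℝ) (hQ : Q.PosDef) :
    ∃ a > (0:ℝ), ∃ b > (0:ℝ), ∀ x : Fin n → ℝ,
      a * (x ⬝ᵥ x) ≤ x ⬝ᵥ Q *ᵥ x ∧ x ⬝ᵥ Q *ᵥ x ≤ b * (x ⬝ᵥ x) := by
  set B := CFC.sqrt Q with hBdef
  have hBB : B * B = Q := CFC.sqrt_mul_sqrt_self Q (Matrix.nonneg_iff_posSemidef.mpr hQ.posSemidef)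
  have hBh : Bᵀ = B :=
    transpose_eq_of_herm (Matrix.nonneg_iff_posSemidef.mp (CFC.sqrt_nonneg Q)).isHermitian
  have hdet : IsUnit B.det := by
    have : B.det * B.det = Q.det := by rw [← Matrix.det_mul, hBB]
    have hQd := hQ.det_pos
    rw [isUnit_iff_ne_zero]
    intro h0; rw [h0, mul_zero] at this; exact (ne_of_gt hQd) this.symm
  have hinv : B⁻¹ * B = 1 := Matrix.nonsing_inv_mul B hdet
  have hquad : ∀ x : Fin n → ℝ, x ⬝ᵥ Q *ᵥ x = (B *ᵥ x) ⬝ᵥ (B *ᵥ x) := by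
    intro x
    rw [← hBB, ← Matrix.mulVec_mulVec, dot_sym_mulVec hBh]
  refine ⟨(‖B⁻¹‖^2 + 1)⁻¹, by positivity, ‖B‖^2 + 1, by positivity, fun x => ?_⟩
  constructor
  · rw [hquad, inv_mul_le_iff₀ (by positivity)]
    have hx : x = B⁻¹ *ᵥ (B *ᵥ x) := by rw [Matrix.mulVec_mulVec, hinv, Matrix.one_mulVec]
    calc x ⬝ᵥ x = (B⁻¹ *ᵥ (B *ᵥ x)) ⬝ᵥ (B⁻¹ *ᵥ (B *ᵥ x)) := by rw [← hx]
      _ ≤ ‖B⁻¹‖^2 * ((B *ᵥ x) ⬝ᵥ (B *ᵥ x)) := dotProduct_mulVec_self_le' _ _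
      _ ≤ (‖B⁻¹‖ ^ 2 + 1) * ((B *ᵥ x) ⬝ᵥ (B *ᵥ x)) := by
          nlinarith [dot_self_nonneg (B *ᵥ x)]
  · rw [hquad]
    calc (B *ᵥ x) ⬝ᵥ (B *ᵥ x) ≤ ‖B‖^2 * (x ⬝ᵥ x) := dotProduct_mulVec_self_le' _ _
      _ ≤ (‖B‖^2 + 1) * (x ⬝ᵥ x) := by nlinarith [dot_self_nonneg x]

def evalMulVec (x : Fin n → ℝ) (i : Fin n) : Matrix (Fin n) (Fin n) ℝ →ₗ[ℝ] ℝ where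
  toFun M := (M *ᵥ x) i
  map_add' M N := by simp [Matrix.add_mulVec]
  map_smul' c M := by simp [Matrix.smul_mulVec]

lemma hasDerivAt_expMul (Am : Matrix (Fin n) (Fin n) ℝ) (x : Fin n → ℝ) (t : ℝ) (i : Fin n) :
    HasDerivAt (fun u : ℝ => (exp (u • Am) *ᵥ x) i)
      ((Am *ᵥ (exp (t • Am) *ᵥ x)) i) t := by
  have hd := hasDerivAt_exp_smul_const' (𝕂 := ℝ) Am t
  have hL := ((evalMulVec x i).toContinuousLinearMap.hasFDerivAt
    (x := exp (t • Am))).comp_hasDerivAt t hd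
  simp [evalMulVec, Matrix.mulVec_mulVec] at hL ⊢
  exact hL

lemma quad_eq_sum (Qm : Matrix (Fin n) (Fin n) ℝ) (v : Fin n → ℝ) :
    v ⬝ᵥ Qm *ᵥ v = ∑ i, v i * ∑ j, Qm i j * v j := by
  simp [dotProduct, Matrix.mulVec]

lemma lyap_quad_decay (Qm Am : Matrix (Fin n) (Fin n) ℝ) (c : ℝ)
    (hpsd : (c • Qm - (Qm * Am + Amᵀ * Qm)).PosSemidef)
    (x : Fin n → ℝ) {t : ℝ} (ht : 0 ≤ t) :
    (exp (t • Am) *ᵥ x) ⬝ᵥ Qm *ᵥ (exp (t • Am) *ᵥ x) ≤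
      Real.exp (c * t) * (x ⬝ᵥ Qm *ᵥ x) := by
  set y : ℝ → (Fin n → ℝ) := fun u => exp (u • Am) *ᵥ x with hydef
  have hy : ∀ (u : ℝ) (i : Fin n), HasDerivAt (fun u => y u i) ((Am *ᵥ y u) i) u :=
    fun u i => hasDerivAt_expMul Am x u i
  set φ : ℝ → ℝ := fun u => ∑ i, y u i * ∑ j, Qm i j * y u j with hφdef
  have key : ∀ v : Fin n → ℝ,
      (Am *ᵥ v) ⬝ᵥ (Qm *ᵥ v) + v ⬝ᵥ (Qm *ᵥ (Am *ᵥ v)) ≤ c * (v ⬝ᵥ (Qm *ᵥ v)) := by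
    intro v
    have h0 := hpsd.dotProduct_mulVec_nonneg v
    have hst : star v = v := by simp
    rw [hst, Matrix.sub_mulVec, Matrix.add_mulVec, Matrix.smul_mulVec,
      dotProduct_sub, dotProduct_add, dotProduct_smul] at h0
    have h1 : v ⬝ᵥ ((Qm * Am) *ᵥ v) = v ⬝ᵥ (Qm *ᵥ (Am *ᵥ v)) := by
      rw [← Matrix.mulVec_mulVec]
    have h2 : v ⬝ᵥ ((Amᵀ * Qm) *ᵥ v) = (Am *ᵥ v) ⬝ᵥ (Qm *ᵥ v) := by
      rw [← Matrix.mulVec_mulVec, Matrix.dotProduct_mulVec, Matrix.vecMul_transpose]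
    rw [h1, h2] at h0
    have hsm : c • (v ⬝ᵥ Qm *ᵥ v) = c * (v ⬝ᵥ Qm *ᵥ v) := rfl
    linarith [h0]
  have hφ : ∀ u : ℝ, HasDerivAt φ
      ((Am *ᵥ y u) ⬝ᵥ (Qm *ᵥ y u) + (y u) ⬝ᵥ (Qm *ᵥ (Am *ᵥ y u))) u := by
    intro u
    have hterm : ∀ i : Fin n, HasDerivAt (fun w => y w i * ∑ j, Qm i j * y w j)
        ((Am *ᵥ y u) i * (∑ j, Qm i j * y u j) + y u i * (∑ j, Qm i j * (Am *ᵥ y u) j)) u := by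
      intro i
      have hsum : HasDerivAt (fun w => ∑ j, Qm i j * y w j)
          (∑ j, Qm i j * (Am *ᵥ y u) j) u :=
        HasDerivAt.fun_sum fun j _ => (hy u j).const_mul (Qm i j)
      exact (hy u i).mul hsum
    have := HasDerivAt.fun_sum (fun i (_ : i ∈ Finset.univ) => hterm i)
    refine this.congr_deriv ?_
    rw [Finset.sum_add_distrib]
    congr 1 <;> simp [dotProduct, Matrix.mulVec]
  set g : ℝ → ℝ := fun u => Real.exp ((-c) * u) * φ u with hgdef
  have hg : ∀ u : ℝ, HasDerivAt g
      (Real.exp ((-c) * u) * (-c) * φ u +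
        Real.exp ((-c) * u) * ((Am *ᵥ y u) ⬝ᵥ (Qm *ᵥ y u) + (y u) ⬝ᵥ (Qm *ᵥ (Am *ᵥ y u)))) u := by
    intro u
    have h1 : HasDerivAt (fun u : ℝ => (-c) * u) (-c) u := by
      simpa using (hasDerivAt_id u).const_mul (-c)
    exact (h1.exp).mul (hφ u)
  have hgnonpos : ∀ u : ℝ, deriv g u ≤ 0 := by
    intro u
    rw [(hg u).deriv]
    have hk := key (y u)
    have hquad : φ u = (y u) ⬝ᵥ (Qm *ᵥ (y u)) := (quad_eq_sum Qm (y u)).symm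
    have hexp := Real.exp_pos ((-c) * u)
    rw [hquad]
    have hm := mul_le_mul_of_nonneg_left hk hexp.le
    nlinarith [hm]
  have hmono : AntitoneOn g (Set.Ici (0:ℝ)) := by
    apply antitoneOn_of_deriv_nonpos (convex_Ici 0)
    · have hdiff : Differentiable ℝ g := fun u => (hg u).differentiableAt
      exact hdiff.continuous.continuousOn
    · intro u hu
      exact ((hg u).differentiableAt).differentiableWithinAt
    · intro u hu
      exact hgnonpos u
  have hy0 : y 0 = x := by
    rw [hydef]; simp [Matrix.one_mulVec]
  have hg0 : g 0 = x ⬝ᵥ Qm *ᵥ x := by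
    have hq0 : φ 0 = (y 0) ⬝ᵥ Qm *ᵥ (y 0) := (quad_eq_sum Qm (y 0)).symm
    rw [hgdef]
    simp only [mul_zero, Real.exp_zero, one_mul]
    rw [hq0, hy0]
  have hgt : g t ≤ g 0 := hmono (Set.self_mem_Ici) ht ht
  rw [hg0] at hgt
  have hφt : φ t = (y t) ⬝ᵥ Qm *ᵥ (y t) := (quad_eq_sum Qm (y t)).symm
  have hmul := mul_le_mul_of_nonneg_left hgt (le_of_lt (Real.exp_pos (c * t)))
  have hee : Real.exp (c * t) * Real.exp ((-c) * t) = 1 := by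
    rw [← Real.exp_add]; ring_nf; exact Real.exp_zero
  calc (y t) ⬝ᵥ Qm *ᵥ (y t) = Real.exp (c*t) * (Real.exp ((-c)*t) * φ t) := by
        rw [← mul_assoc, hee, one_mul, hφt]
    _ ≤ Real.exp (c * t) * (x ⬝ᵥ Qm *ᵥ x) := hmul

lemma psd_quad_le {Qq Qp Rm : Matrix (Fin n) (Fin n) ℝ} {g : ℝ}
    (h : (g • Qq - Rmᵀ * Qp * Rm).PosSemidef) (w : Fin n → ℝ) :
    (Rm *ᵥ w) ⬝ᵥ Qp *ᵥ (Rm *ᵥ w) ≤ g * (w ⬝ᵥ Qq *ᵥ w) := by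
  have h0 := h.dotProduct_mulVec_nonneg w
  have hst : star w = w := by simp
  rw [hst, Matrix.sub_mulVec, Matrix.smul_mulVec,
    dotProduct_sub, dotProduct_smul] at h0
  have h1 : w ⬝ᵥ ((Rmᵀ * Qp * Rm) *ᵥ w) = (Rm *ᵥ w) ⬝ᵥ (Qp *ᵥ (Rm *ᵥ w)) := by
    rw [Matrix.mul_assoc, ← Matrix.mulVec_mulVec, Matrix.dotProduct_mulVec,
      Matrix.vecMul_transpose, ← Matrix.mulVec_mulVec]
  rw [h1] at h0
  have hsm : g • (w ⬝ᵥ Qq *ᵥ w) = g * (w ⬝ᵥ Qq *ᵥ w) := rfl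
  linarith [h0]

lemma count_sum_step {P : Type*} [DecidableEq P] (T : Finset P) (f : P → ℝ) (p : ℕ → P) (j : ℕ) :
    ∑ q ∈ T, f q * (((Finset.range (j+1)).filter fun i => p i = q).card : ℝ)
      = (∑ q ∈ T, f q * (((Finset.range j).filter fun i => p i = q).card : ℝ))
        + (if p j ∈ T then f (p j) else 0) := by
  have hcard : ∀ q : P, ((((Finset.range (j+1)).filter fun i => p i = q).card : ℝ))
      = (((Finset.range j).filter fun i => p i = q).card : ℝ) + (if p j = q then 1 else 0) := by
    intro q
    rw [Finset.range_add_one, Finset.filter_insert]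
    by_cases h : p j = q
    · rw [if_pos h, Finset.card_insert_of_notMem (by simp), if_pos h]; push_cast; ring
    · rw [if_neg h, if_neg h, add_zero]
  simp_rw [hcard, mul_add, Finset.sum_add_distrib]
  congr 1
  simp_rw [mul_ite, mul_one, mul_zero]
  exact Finset.sum_ite_eq T (p j) f

end RSSAux


open RSSAux in
/-- Mode-dependent MLF criterion for reset switched systems with both stable and unstable
modes: under the Lyapunov inequalities with rates `λ_p`, `μ_p` and reset gains `γ_{(q,p)}`,
and the limsup condition
`limsup_j (−Σ_{p∈𝔰} λ_p N^p(j) τ_p + Σ_{p∈𝔲} μ_p N^p(j) η_p + j ln γ) < 0` along a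
switching signal with mode-dependent dwell times `(τ_p)` and flee times `(η_p)`, the reset
switched system is stable along this signal. -/
theorem reset_system_stable_of_MLF_mode_dependent_mixed {n : ℕ} {P : Type*}
    [Fintype P] [DecidableEq P]
    (S U : Finset P) (hSU : S ∪ U = Finset.univ) (hdisj : Disjoint S U)
    (A : P → Matrix (Fin n) (Fin n) ℝ)
    (R : P → P → Matrix (Fin n) (Fin n) ℝ)
    (Q : P → Matrix (Fin n) (Fin n) ℝ) (hQ : ∀ p, (Q p).PosDef)
    (lamf muf : P → ℝ) (γf : P → P → ℝ)
    (hlamf : ∀ p ∈ S, 0 < lamf p) (hmuf : ∀ p ∈ U, 0 < muf p)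
    (hγf : ∀ p q, 0 < γf p q)
    (hQA_s : ∀ p ∈ S, ((-(lamf p)) • Q p - (Q p * A p + (A p)ᵀ * Q p)).PosSemidef)
    (hQA_u : ∀ p ∈ U, ((muf p) • Q p - (Q p * A p + (A p)ᵀ * Q p)).PosSemidef)
    (hR : ∀ p q, (γf q p • Q q - (R q p)ᵀ * Q p * R q p).PosSemidef)
    (γ : ℝ)
    (hγ_ub : ∀ p q, γf q p ≤ γ) (hγ_mem : ∃ p q, γ = γf q p)
    (τf ηf : P → ℝ) (hτf : ∀ p ∈ S, 0 < τf p) (hηf : ∀ p ∈ U, 0 < ηf p)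
    (p : ℕ → P) (d : ℕ → ℝ)
    (hd : ∀ k, 1 ≤ k → 0 < d k)
    (hdS : ∀ k, 1 ≤ k → p (k - 1) ∈ S → τf (p (k - 1)) ≤ d k)
    (hdU : ∀ k, 1 ≤ k → p (k - 1) ∈ U → d k ≤ ηf (p (k - 1)))
    (hlimsup : Filter.limsup (fun j : ℕ =>
        -(∑ q ∈ S, lamf q * (((Finset.range j).filter fun i => p i = q).card : ℝ) * τf q) +
          (∑ q ∈ U, muf q * (((Finset.range j).filter fun i => p i = q).card : ℝ) * ηf q) +
          (j : ℝ) * Real.log γ) Filter.atTop < 0) :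
    ∃ C > (0 : ℝ), ∀ (j : ℕ) (s : ℝ), 0 ≤ s → s ≤ d (j + 1) →
      ‖exp (s • A (p j)) * resetTransition A R p d j‖ ≤ C := by
  classical
  -- the limsup function
  set G : ℕ → ℝ := fun j =>
      -(∑ q ∈ S, lamf q * (((Finset.range j).filter fun i => p i = q).card : ℝ) * τf q) +
        (∑ q ∈ U, muf q * (((Finset.range j).filter fun i => p i = q).card : ℝ) * ηf q) +
        (j : ℝ) * Real.log γ with hGdef
  have hγpos : 0 < γ := by
    obtain ⟨a, b, hab⟩ := hγ_mem
    rw [hab]; exact hγf b a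
  -- mode dichotomy
  have hmode : ∀ q : P, q ∈ S ∨ q ∈ U := by
    intro q
    have : q ∈ S ∪ U := by rw [hSU]; exact Finset.mem_univ q
    exact Finset.mem_union.mp this
  have hSnotU : ∀ q : P, q ∈ S → q ∉ U := fun q hq hq' =>
    (Finset.disjoint_left.mp hdisj) hq hq'
  -- the step function
  set step : ℕ → ℝ := fun j =>
    (if p j ∈ S then -(lamf (p j) * τf (p j)) else muf (p j) * ηf (p j)) with hstepdef
  have hGstep : ∀ j : ℕ, G (j+1) = G j + step j + Real.log γ := by
    intro j
    have hSsum := count_sum_step S (fun q => lamf q * τf q) p j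
    have hUsum := count_sum_step U (fun q => muf q * ηf q) p j
    have hform : ∀ (T : Finset P) (f g : P → ℝ) (k : ℕ),
        ∑ q ∈ T, f q * (((Finset.range k).filter fun i => p i = q).card : ℝ) * g q
          = ∑ q ∈ T, (f q * g q) * (((Finset.range k).filter fun i => p i = q).card : ℝ) :=
      fun T f g k => Finset.sum_congr rfl fun q _ => by ring
    rw [hGdef]
    simp only
    rw [hform S lamf τf (j+1), hform U muf ηf (j+1), hform S lamf τf j, hform U muf ηf j,
      hSsum, hUsum]
    rw [hstepdef]
    simp only
    push_cast
    rcases hmode (p j) with hpS | hpU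
    · rw [if_pos hpS, if_pos hpS, if_neg (hSnotU _ hpS)]; ring
    · have hpnS : p j ∉ S := fun h => (hSnotU _ h) hpU
      rw [if_neg hpnS, if_neg hpnS, if_pos hpU]; ring
  have hG0 : G 0 = 0 := by
    rw [hGdef]; simp
  -- quadratic form bounds for each Q q
  choose a ha b hb hbound using fun q : P => posDef_dotProduct_bounds (Q q) (hQ q)
  have hPne : (Finset.univ : Finset P).Nonempty := ⟨p 0, Finset.mem_univ _⟩
  set amin : ℝ := Finset.univ.inf' hPne a with hamin
  have haminpos : 0 < amin := by
    rw [hamin, Finset.lt_inf'_iff]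
    exact fun q _ => ha q
  have haminle : ∀ q : P, amin ≤ a q := fun q => Finset.inf'_le a (Finset.mem_univ q)
  set b0 : ℝ := b (p 0) with hb0
  have hb0pos : 0 < b0 := hb (p 0)
  -- nonnegativity of quadratic forms
  have hqn : ∀ (q : P) (v : Fin n → ℝ), 0 ≤ v ⬝ᵥ Q q *ᵥ v :=
    fun q v => quad_nonneg (hQ q).posSemidef v
  -- main induction
  have key : ∀ (j : ℕ) (x : Fin n → ℝ),
      (resetTransition A R p d j *ᵥ x) ⬝ᵥ Q (p j) *ᵥ (resetTransition A R p d j *ᵥ x)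
        ≤ Real.exp (G j) * (x ⬝ᵥ Q (p 0) *ᵥ x) := by
    intro j
    induction j with
    | zero =>
      intro x
      rw [hG0]
      simp only [resetTransition, Matrix.one_mulVec, Real.exp_zero, one_mul]
      exact le_refl _
    | succ j ih =>
      intro x
      set Φ := resetTransition A R p d j with hΦ
      set z : Fin n → ℝ := Φ *ᵥ x with hz
      set E := exp (d (j+1) • A (p j)) with hE
      set w : Fin n → ℝ := E *ᵥ z with hw
      have hΦ1 : resetTransition A R p d (j+1) *ᵥ x = R (p j) (p (j+1)) *ᵥ w := by
        show (R (p j) (p (j+1)) * E * Φ) *ᵥ x = _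
        rw [← Matrix.mulVec_mulVec, ← Matrix.mulVec_mulVec]
      rw [hΦ1]
      have hreset : (R (p j) (p (j+1)) *ᵥ w) ⬝ᵥ Q (p (j+1)) *ᵥ (R (p j) (p (j+1)) *ᵥ w)
          ≤ γf (p j) (p (j+1)) * (w ⬝ᵥ Q (p j) *ᵥ w) :=
        psd_quad_le (hR (p (j+1)) (p j)) w
      -- mode-dependent flow estimate
      set c : ℝ := if p j ∈ S then -(lamf (p j)) else muf (p j) with hc
      have hdpos : (0:ℝ) ≤ d (j+1) := (hd (j+1) (by omega)).le
      have hflow : w ⬝ᵥ Q (p j) *ᵥ w ≤ Real.exp (c * d (j+1)) * (z ⬝ᵥ Q (p j) *ᵥ z) := by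
        rcases hmode (p j) with hpS | hpU
        · rw [hc, if_pos hpS]
          exact lyap_quad_decay (Q (p j)) (A (p j)) (-(lamf (p j)))
            (hQA_s (p j) hpS) z hdpos
        · have hpnS : p j ∉ S := fun h => (hSnotU _ h) hpU
          rw [hc, if_neg hpnS]
          exact lyap_quad_decay (Q (p j)) (A (p j)) (muf (p j))
            (hQA_u (p j) hpU) z hdpos
      have hcd : Real.exp (c * d (j+1)) ≤ Real.exp (step j) := by
        apply Real.exp_le_exp.mpr
        rcases hmode (p j) with hpS | hpU
        · rw [hc, if_pos hpS, hstepdef]; simp only [if_pos hpS]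
          have hτ : τf (p j) ≤ d (j+1) := by
            have := hdS (j+1) (by omega)
            simpa using this hpS
          have hl := hlamf (p j) hpS
          nlinarith
        · have hpnS : p j ∉ S := fun h => (hSnotU _ h) hpU
          rw [hc, if_neg hpnS, hstepdef]; simp only [if_neg hpnS]
          have hη : d (j+1) ≤ ηf (p j) := by
            have := hdU (j+1) (by omega)
            simpa using this hpU
          have hm := hmuf (p j) hpU
          nlinarith
      have hγle : γf (p j) (p (j+1)) ≤ γ := hγ_ub (p (j+1)) (p j)
      have hγfpos : 0 < γf (p j) (p (j+1)) := hγf (p j) (p (j+1))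
      have hX : 0 ≤ x ⬝ᵥ Q (p 0) *ᵥ x := hqn (p 0) x
      have hZ : 0 ≤ z ⬝ᵥ Q (p j) *ᵥ z := hqn (p j) z
      have ihz := ih x
      calc (R (p j) (p (j+1)) *ᵥ w) ⬝ᵥ Q (p (j+1)) *ᵥ (R (p j) (p (j+1)) *ᵥ w)
          ≤ γf (p j) (p (j+1)) * (w ⬝ᵥ Q (p j) *ᵥ w) := hreset
        _ ≤ γf (p j) (p (j+1)) * (Real.exp (c * d (j+1)) * (z ⬝ᵥ Q (p j) *ᵥ z)) :=
            mul_le_mul_of_nonneg_left hflow hγfpos.le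
        _ ≤ γ * (Real.exp (step j) * (Real.exp (G j) * (x ⬝ᵥ Q (p 0) *ᵥ x))) := by
            apply mul_le_mul hγle _ _ hγpos.le
            · apply mul_le_mul hcd _ hZ (Real.exp_pos _).le
              exact ihz
            · exact mul_nonneg (Real.exp_pos _).le hZ
        _ = Real.exp (G (j+1)) * (x ⬝ᵥ Q (p 0) *ᵥ x) := by
            rw [hGstep j, Real.exp_add (G j + step j) (Real.log γ),
              Real.exp_add (G j) (step j), Real.exp_log hγpos]; ring
  -- uniform bound on exp (G j)
  have hbdexp : ∃ B : ℝ, 0 < B ∧ ∀ j : ℕ, Real.exp (G j) ≤ B := by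
    have hbdd : Filter.IsBoundedUnder (· ≤ ·) Filter.atTop G := by
      by_contra hnb
      have hempty : {a : ℝ | ∀ᶠ (j : ℕ) in Filter.atTop, G j ≤ a} = ∅ := by
        ext t
        simp only [Set.mem_setOf_eq, Set.mem_empty_iff_false, iff_false]
        intro ht
        exact hnb ⟨t, by simpa [Filter.eventually_map] using ht⟩
      rw [Filter.limsup_eq, hempty, Real.sInf_empty] at hlimsup
      exact lt_irrefl 0 hlimsup
    have hev : ∀ᶠ (j : ℕ) in Filter.atTop, G j < 0 :=
      Filter.eventually_lt_of_limsup_lt hlimsup hbdd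
    obtain ⟨N, hN⟩ := Filter.eventually_atTop.mp hev
    refine ⟨1 + ∑ i ∈ Finset.range (N+1), Real.exp (G i), by positivity, fun j => ?_⟩
    have hsumnn : 0 ≤ ∑ i ∈ Finset.range (N+1), Real.exp (G i) :=
      Finset.sum_nonneg fun i _ => (Real.exp_pos _).le
    by_cases hj : N ≤ j
    · have h1 : Real.exp (G j) ≤ 1 := Real.exp_le_one_iff.mpr (hN j hj).le
      linarith
    · have hjm : j ∈ Finset.range (N+1) := Finset.mem_range.mpr (by omega)
      have := Finset.single_le_sum (f := fun i => Real.exp (G i))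
        (fun i _ => (Real.exp_pos _).le) hjm
      linarith
  obtain ⟨B, hBpos, hB⟩ := hbdexp
  -- in-interval growth constant
  set K : ℝ := Real.exp (∑ q ∈ U, muf q * ηf q) with hK
  have hKpos : 0 < K := Real.exp_pos _
  have hKbig : ∀ (j : ℕ) (s : ℝ), 0 ≤ s → s ≤ d (j+1) →
      Real.exp ((if p j ∈ S then -(lamf (p j)) else muf (p j)) * s) ≤ K := by
    intro j s hs hsd
    rw [hK]
    apply Real.exp_le_exp.mpr
    have hsumnn : (0:ℝ) ≤ ∑ q ∈ U, muf q * ηf q :=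
      Finset.sum_nonneg fun q hq => (mul_pos (hmuf q hq) (hηf q hq)).le
    rcases hmode (p j) with hpS | hpU
    · rw [if_pos hpS]
      have := hlamf (p j) hpS
      nlinarith
    · have hpnS : p j ∉ S := fun h => (hSnotU _ h) hpU
      rw [if_neg hpnS]
      have hη : d (j+1) ≤ ηf (p j) := by
        have := hdU (j+1) (by omega)
        simpa using this hpU
      have hm := hmuf (p j) hpU
      have h1 : muf (p j) * s ≤ muf (p j) * ηf (p j) := by nlinarith
      have h2 : muf (p j) * ηf (p j) ≤ ∑ q ∈ U, muf q * ηf q :=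
        Finset.single_le_sum (f := fun q => muf q * ηf q)
          (fun q hq => (mul_pos (hmuf q hq) (hηf q hq)).le) hpU
      linarith
  -- final constant
  set Cq : ℝ := (K * B * b0) / amin with hCq
  have hCqpos : 0 < Cq := by
    rw [hCq]; positivity
  refine ⟨Real.sqrt Cq, Real.sqrt_pos.mpr hCqpos, fun j s hs hsd => ?_⟩
  apply l2_opNorm_le_of_dotProduct _ _ (Real.sqrt_nonneg _)
  intro x
  rw [Real.sq_sqrt hCqpos.le]
  set Φ := resetTransition A R p d j with hΦ
  set z : Fin n → ℝ := Φ *ᵥ x with hz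
  set u : Fin n → ℝ := exp (s • A (p j)) *ᵥ z with hu
  have hux : (exp (s • A (p j)) * Φ) *ᵥ x = u := by
    rw [← Matrix.mulVec_mulVec]
  rw [hux]
  set c : ℝ := if p j ∈ S then -(lamf (p j)) else muf (p j) with hc
  have hflow : u ⬝ᵥ Q (p j) *ᵥ u ≤ Real.exp (c * s) * (z ⬝ᵥ Q (p j) *ᵥ z) := by
    rcases hmode (p j) with hpS | hpU
    · rw [hc, if_pos hpS]
      exact lyap_quad_decay (Q (p j)) (A (p j)) (-(lamf (p j))) (hQA_s (p j) hpS) z hs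
    · have hpnS : p j ∉ S := fun h => (hSnotU _ h) hpU
      rw [hc, if_neg hpnS]
      exact lyap_quad_decay (Q (p j)) (A (p j)) (muf (p j)) (hQA_u (p j) hpU) z hs
  have hZ : 0 ≤ z ⬝ᵥ Q (p j) *ᵥ z := quad_nonneg (hQ (p j)).posSemidef z
  have hX : 0 ≤ x ⬝ᵥ Q (p 0) *ᵥ x := quad_nonneg (hQ (p 0)).posSemidef x
  have hcs : Real.exp (c * s) * s = Real.exp (c*s) * s := rfl
  have hcsle : Real.exp (c * s) ≤ K := hKbig j s hs hsd
  have hmain : u ⬝ᵥ Q (p j) *ᵥ u ≤ K * B * b0 * (x ⬝ᵥ x) := by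
    have h1 : z ⬝ᵥ Q (p j) *ᵥ z ≤ Real.exp (G j) * (x ⬝ᵥ Q (p 0) *ᵥ x) := key j x
    have h2 : x ⬝ᵥ Q (p 0) *ᵥ x ≤ b0 * (x ⬝ᵥ x) := (hbound (p 0) x).2
    have h3 : Real.exp (G j) ≤ B := hB j
    have hxx : 0 ≤ x ⬝ᵥ x := dot_self_nonneg x
    calc u ⬝ᵥ Q (p j) *ᵥ u ≤ Real.exp (c * s) * (z ⬝ᵥ Q (p j) *ᵥ z) := hflow
      _ ≤ K * (B * (b0 * (x ⬝ᵥ x))) := by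
          apply mul_le_mul hcsle _ hZ hKpos.le
          calc z ⬝ᵥ Q (p j) *ᵥ z ≤ Real.exp (G j) * (x ⬝ᵥ Q (p 0) *ᵥ x) := h1
            _ ≤ B * (b0 * (x ⬝ᵥ x)) := by
                apply mul_le_mul h3 h2 hX hBpos.le
      _ = K * B * b0 * (x ⬝ᵥ x) := by ring
  have hlow : amin * (u ⬝ᵥ u) ≤ u ⬝ᵥ Q (p j) *ᵥ u := by
    have h1 := (hbound (p j) u).1
    have h2 := haminle (p j)
    have huu := dot_self_nonneg u
    nlinarith
  rw [hCq]
  rw [div_mul_eq_mul_div, le_div_iff₀ haminpos]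
  nlinarith [hmain, hlow]
end
end
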